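/- Let n : ℕ and for i : Fin (2*n) write aᵢ = FreeGroup.of i in FreeGroup (Fin (2*n)). Then the quotient of FreeGroup (Fin (2*n)) by the normal closure of {(a₀ * a₁ * ⋯ * a₂ₙ₋₁) * (a₀⁻¹ * a₁⁻¹ * ⋯ * a₂ₙ₋₁⁻¹)} is isomorphic to the quotient of FreeGroup (Fin (2*n)) by the normal closure of {∏_{i<n} (a₂ᵢ * a₂ᵢ₊₁ * a₂ᵢ⁻¹ * a₂ᵢ₊₁⁻¹)} (the product of commutators taken in increasing order of i). (Example (v) for an even number of letters: the word a₁⋯a₂ₙā₁⋯ā₂ₙ represents the connected sum of n tori 𝕋^{#n}.) -/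

import Mathlib

namespace ExampleVAux

variable (n : ℕ)

/-- Suffix product of generators `a_k a_{k+1} ⋯ a_{2n-1}`. -/
def Sw (k : ℕ) : FreeGroup (Fin (2 * n)) :=
  if h : k < 2 * n then FreeGroup.of ⟨k, h⟩ * Sw (k + 1) else 1
termination_by 2 * n - k

/-- Suffix product of inverses of generators. -/
def Tw (k : ℕ) : FreeGroup (Fin (2 * n)) :=
  if h : k < 2 * n then (FreeGroup.of (⟨k, h⟩ : Fin (2 * n)))⁻¹ * Tw (k + 1) else 1
termination_by 2 * n - k

/-- Suffix product of commutators. -/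
def Cw (k : ℕ) : FreeGroup (Fin (2 * n)) :=
  if h : k < n then
    (FreeGroup.of (⟨2 * k, by omega⟩ : Fin (2 * n)) *
     FreeGroup.of (⟨2 * k + 1, by omega⟩ : Fin (2 * n)) *
     (FreeGroup.of (⟨2 * k, by omega⟩ : Fin (2 * n)))⁻¹ *
     (FreeGroup.of (⟨2 * k + 1, by omega⟩ : Fin (2 * n)))⁻¹) * Cw (k + 1)
  else 1
termination_by n - k

def fmap (k : ℕ) : Fin (2 * n) → FreeGroup (Fin (2 * n)) := fun j =>
  if h : (j : ℕ) = 2 * k then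
    FreeGroup.of j * (FreeGroup.of (⟨2 * k + 1, by omega⟩ : Fin (2 * n)))⁻¹ * Sw n (2 * k + 2)
  else if h' : (j : ℕ) = 2 * k + 1 then
    (Sw n (2 * k + 2))⁻¹ * FreeGroup.of j
  else FreeGroup.of j

def gmap (k : ℕ) : Fin (2 * n) → FreeGroup (Fin (2 * n)) := fun j =>
  if h : (j : ℕ) = 2 * k then
    FreeGroup.of j * FreeGroup.of (⟨2 * k + 1, by omega⟩ : Fin (2 * n))
  else if h' : (j : ℕ) = 2 * k + 1 then
    Sw n (2 * k + 2) * FreeGroup.of j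
  else FreeGroup.of j

def phiH (k : ℕ) : FreeGroup (Fin (2 * n)) →* FreeGroup (Fin (2 * n)) :=
  FreeGroup.lift (fmap n k)

def psiH (k : ℕ) : FreeGroup (Fin (2 * n)) →* FreeGroup (Fin (2 * n)) :=
  FreeGroup.lift (gmap n k)

lemma phiH_of_fix (k : ℕ) (j : Fin (2 * n)) (h1 : (j : ℕ) ≠ 2 * k) (h2 : (j : ℕ) ≠ 2 * k + 1) :
    phiH n k (FreeGroup.of j) = FreeGroup.of j := by
  simp [phiH, fmap, h1, h2]

lemma psiH_of_fix (k : ℕ) (j : Fin (2 * n)) (h1 : (j : ℕ) ≠ 2 * k) (h2 : (j : ℕ) ≠ 2 * k + 1) :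
    psiH n k (FreeGroup.of j) = FreeGroup.of j := by
  simp [psiH, gmap, h1, h2]

lemma phiH_Sw (k m : ℕ) (hm : 2 * k + 2 ≤ m) : phiH n k (Sw n m) = Sw n m := by
  by_cases h : m < 2 * n
  · rw [Sw, dif_pos h, map_mul, phiH_of_fix n k ⟨m, h⟩ (by simp; omega) (by simp; omega),
      phiH_Sw k (m + 1) (by omega)]
  · rw [Sw, dif_neg h, map_one]
termination_by 2 * n - m

lemma psiH_Sw (k m : ℕ) (hm : 2 * k + 2 ≤ m) : psiH n k (Sw n m) = Sw n m := by
  by_cases h : m < 2 * n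
  · rw [Sw, dif_pos h, map_mul, psiH_of_fix n k ⟨m, h⟩ (by simp; omega) (by simp; omega),
      psiH_Sw k (m + 1) (by omega)]
  · rw [Sw, dif_neg h, map_one]
termination_by 2 * n - m

lemma phiH_Tw (k m : ℕ) (hm : 2 * k + 2 ≤ m) : phiH n k (Tw n m) = Tw n m := by
  by_cases h : m < 2 * n
  · rw [Tw, dif_pos h, map_mul, map_inv, phiH_of_fix n k ⟨m, h⟩ (by simp; omega) (by simp; omega),
      phiH_Tw k (m + 1) (by omega)]
  · rw [Tw, dif_neg h, map_one]
termination_by 2 * n - m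

lemma psi_comp_phi (k : ℕ) : (psiH n k).comp (phiH n k) = MonoidHom.id _ := by
  apply FreeGroup.ext_hom
  intro j
  simp only [MonoidHom.comp_apply, MonoidHom.id_apply]
  by_cases h1 : (j : ℕ) = 2 * k
  · have hk : 2 * k + 1 < 2 * n := by have := j.isLt; omega
    rw [show phiH n k (FreeGroup.of j) = FreeGroup.of j *
        (FreeGroup.of (⟨2 * k + 1, hk⟩ : Fin (2 * n)))⁻¹ * Sw n (2 * k + 2) by
          simp [phiH, fmap, h1]]
    rw [map_mul, map_mul, map_inv, psiH_Sw n k _ (le_refl _),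
      show psiH n k (FreeGroup.of j) =
        FreeGroup.of j * FreeGroup.of (⟨2 * k + 1, hk⟩ : Fin (2 * n)) by
          simp [psiH, gmap, h1],
      show psiH n k (FreeGroup.of (⟨2 * k + 1, hk⟩ : Fin (2 * n))) =
        Sw n (2 * k + 2) * FreeGroup.of (⟨2 * k + 1, hk⟩ : Fin (2 * n)) by
          simp [psiH, gmap]]
    group
  · by_cases h2 : (j : ℕ) = 2 * k + 1
    · rw [show phiH n k (FreeGroup.of j) = (Sw n (2 * k + 2))⁻¹ * FreeGroup.of j by
        simp [phiH, fmap, h1, h2]]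
      rw [map_mul, map_inv, psiH_Sw n k _ (le_refl _),
        show psiH n k (FreeGroup.of j) = Sw n (2 * k + 2) * FreeGroup.of j by
          simp [psiH, gmap, h1, h2]]
      group
    · rw [phiH_of_fix n k j h1 h2, psiH_of_fix n k j h1 h2]

lemma phi_comp_psi (k : ℕ) : (phiH n k).comp (psiH n k) = MonoidHom.id _ := by
  apply FreeGroup.ext_hom
  intro j
  simp only [MonoidHom.comp_apply, MonoidHom.id_apply]
  by_cases h1 : (j : ℕ) = 2 * k
  · have hk : 2 * k + 1 < 2 * n := by have := j.isLt; omega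
    rw [show psiH n k (FreeGroup.of j) =
        FreeGroup.of j * FreeGroup.of (⟨2 * k + 1, hk⟩ : Fin (2 * n)) by simp [psiH, gmap, h1]]
    rw [map_mul,
      show phiH n k (FreeGroup.of j) = FreeGroup.of j *
        (FreeGroup.of (⟨2 * k + 1, hk⟩ : Fin (2 * n)))⁻¹ * Sw n (2 * k + 2) by
          simp [phiH, fmap, h1],
      show phiH n k (FreeGroup.of (⟨2 * k + 1, hk⟩ : Fin (2 * n))) =
        (Sw n (2 * k + 2))⁻¹ * FreeGroup.of (⟨2 * k + 1, hk⟩ : Fin (2 * n)) by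
          simp [phiH, fmap]]
    group
  · by_cases h2 : (j : ℕ) = 2 * k + 1
    · rw [show psiH n k (FreeGroup.of j) = Sw n (2 * k + 2) * FreeGroup.of j by
        simp [psiH, gmap, h1, h2]]
      rw [map_mul, phiH_Sw n k _ (le_refl _),
        show phiH n k (FreeGroup.of j) = (Sw n (2 * k + 2))⁻¹ * FreeGroup.of j by
          simp [phiH, fmap, h1, h2]]
      group
    · rw [psiH_of_fix n k j h1 h2, phiH_of_fix n k j h1 h2]

/-- The elementary automorphism at stage `k`. -/
def eAut (k : ℕ) : FreeGroup (Fin (2 * n)) ≃* FreeGroup (Fin (2 * n)) :=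
  MonoidHom.toMulEquiv (phiH n k) (psiH n k) (psi_comp_phi n k) (phi_comp_psi n k)

lemma eAut_apply (k : ℕ) (x : FreeGroup (Fin (2 * n))) : eAut n k x = phiH n k x := rfl

/-- Composition of the elementary automorphisms from stage `k` on. -/
def EAut (k : ℕ) : FreeGroup (Fin (2 * n)) ≃* FreeGroup (Fin (2 * n)) :=
  if h : k < n then (eAut n k).trans (EAut (k + 1)) else MulEquiv.refl _
termination_by n - k

lemma EAut_of_fix (m : ℕ) (j : Fin (2 * n)) (hj : (j : ℕ) < 2 * m) :
    EAut n m (FreeGroup.of j) = FreeGroup.of j := by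
  rw [EAut]
  by_cases h : m < n
  · rw [dif_pos h]
    simp only [MulEquiv.trans_apply]
    rw [eAut_apply, phiH_of_fix n m j (by omega) (by omega),
      EAut_of_fix (m + 1) j (by omega)]
  · rw [dif_neg h]; rfl
termination_by n - m

lemma main_key (k : ℕ) : EAut n k (Sw n (2 * k) * Tw n (2 * k)) = Cw n k := by
  rw [EAut, Cw]
  by_cases h : k < n
  · rw [dif_pos h, dif_pos h]
    simp only [MulEquiv.trans_apply]
    have h0 : 2 * k < 2 * n := by omega
    have h1 : 2 * k + 1 < 2 * n := by omega
    set x : FreeGroup (Fin (2 * n)) := FreeGroup.of ⟨2 * k, h0⟩ with hx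
    set y : FreeGroup (Fin (2 * n)) := FreeGroup.of ⟨2 * k + 1, h1⟩ with hy
    have hS : Sw n (2 * k) = x * (y * Sw n (2 * k + 2)) := by
      rw [Sw, dif_pos h0, Sw, dif_pos h1]
    have hT : Tw n (2 * k) = x⁻¹ * (y⁻¹ * Tw n (2 * k + 2)) := by
      rw [Tw, dif_pos h0, Tw, dif_pos h1]
    have step : eAut n k (Sw n (2 * k) * Tw n (2 * k)) =
        (x * y * x⁻¹ * y⁻¹) * (Sw n (2 * k + 2) * Tw n (2 * k + 2)) := by
      rw [hS, hT, eAut_apply]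
      simp only [map_mul, map_inv]
      rw [show phiH n k x = x * y⁻¹ * Sw n (2 * k + 2) by simp [phiH, fmap, hx, hy],
        show phiH n k y = (Sw n (2 * k + 2))⁻¹ * y by simp [phiH, fmap, hy],
        phiH_Sw n k _ (le_refl _), phiH_Tw n k _ (le_refl _)]
      group
    rw [step, map_mul]
    have h2 : 2 * (k + 1) = 2 * k + 2 := by omega
    rw [show Sw n (2 * k + 2) * Tw n (2 * k + 2) =
      Sw n (2 * (k + 1)) * Tw n (2 * (k + 1)) by rw [h2]]
    rw [main_key (k + 1)]
    congr 1
    simp only [map_mul, map_inv]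
    rw [EAut_of_fix n (k + 1) ⟨2 * k, h0⟩ (by show 2 * k < 2 * (k + 1); omega),
      EAut_of_fix n (k + 1) ⟨2 * k + 1, h1⟩ (by show 2 * k + 1 < 2 * (k + 1); omega)]
  · rw [dif_neg h, dif_neg h]
    have h0 : ¬ 2 * k < 2 * n := by omega
    rw [Sw, dif_neg h0, Tw, dif_neg h0]
    simp only [MulEquiv.refl_apply, mul_one]
termination_by n - k

lemma ofFn_prod_eq {G : Type*} [Monoid G] {N : ℕ} (g : Fin N → G) (R : ℕ → G)
    (hrec : ∀ k (h : k < N), R k = g ⟨k, h⟩ * R (k + 1))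
    (htop : ∀ k, N ≤ k → R k = 1) (k : ℕ) :
    R k = ((List.ofFn g).drop k).prod := by
  by_cases h : k < N
  · rw [hrec k h, List.drop_eq_getElem_cons (by simpa using h), List.prod_cons,
      List.getElem_ofFn, ofFn_prod_eq g R hrec htop (k + 1)]
  · rw [htop k (not_lt.mp h), List.drop_eq_nil_of_le (by simpa using not_lt.mp h),
      List.prod_nil]
termination_by N - k

lemma Sw_eq_prod : Sw n 0 = (List.ofFn fun i : Fin (2 * n) => FreeGroup.of i).prod := by
  rw [ofFn_prod_eq (fun i : Fin (2 * n) => FreeGroup.of i) (Sw n)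
    (fun k h => by rw [Sw, dif_pos h]) (fun k h => by rw [Sw, dif_neg (not_lt.mpr h)]) 0,
    List.drop_zero]

lemma Tw_eq_prod : Tw n 0 = (List.ofFn fun i : Fin (2 * n) => (FreeGroup.of i)⁻¹).prod := by
  rw [ofFn_prod_eq (fun i : Fin (2 * n) => (FreeGroup.of i)⁻¹) (Tw n)
    (fun k h => by rw [Tw, dif_pos h]) (fun k h => by rw [Tw, dif_neg (not_lt.mpr h)]) 0,
    List.drop_zero]

lemma Cw_eq_prod : Cw n 0 = (List.ofFn fun i : Fin n =>
    FreeGroup.of (⟨2 * i.val, by have := i.isLt; omega⟩ : Fin (2 * n)) *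
    FreeGroup.of (⟨2 * i.val + 1, by have := i.isLt; omega⟩ : Fin (2 * n)) *
    (FreeGroup.of (⟨2 * i.val, by have := i.isLt; omega⟩ : Fin (2 * n)))⁻¹ *
    (FreeGroup.of (⟨2 * i.val + 1, by have := i.isLt; omega⟩ : Fin (2 * n)))⁻¹).prod := by
  rw [ofFn_prod_eq (fun i : Fin n =>
      FreeGroup.of (⟨2 * i.val, by have := i.isLt; omega⟩ : Fin (2 * n)) *
      FreeGroup.of (⟨2 * i.val + 1, by have := i.isLt; omega⟩ : Fin (2 * n)) *
      (FreeGroup.of (⟨2 * i.val, by have := i.isLt; omega⟩ : Fin (2 * n)))⁻¹ *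
      (FreeGroup.of (⟨2 * i.val + 1, by have := i.isLt; omega⟩ : Fin (2 * n)))⁻¹) (Cw n)
    (fun k h => by rw [Cw, dif_pos h]) (fun k h => by rw [Cw, dif_neg (not_lt.mpr h)]) 0,
    List.drop_zero]

end ExampleVAux

/-- Example (v) for an even number of letters: the word `a₁⋯a₂ₙ ā₁⋯ā₂ₙ` represents the
connected sum of `n` tori `𝕋^{#n}`. -/
theorem example_v_iso_torus_sum (n : ℕ) :
    Nonempty
      ((FreeGroup (Fin (2 * n)) ⧸ Subgroup.normalClosure
          {(List.ofFn fun i : Fin (2 * n) => FreeGroup.of i).prod *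
           (List.ofFn fun i : Fin (2 * n) => (FreeGroup.of i)⁻¹).prod}) ≃*
       (FreeGroup (Fin (2 * n)) ⧸ Subgroup.normalClosure
          {(List.ofFn fun i : Fin n =>
              FreeGroup.of (⟨2 * i.val, by omega⟩ : Fin (2 * n)) *
              FreeGroup.of (⟨2 * i.val + 1, by omega⟩ : Fin (2 * n)) *
              (FreeGroup.of (⟨2 * i.val, by omega⟩ : Fin (2 * n)))⁻¹ *
              (FreeGroup.of (⟨2 * i.val + 1, by omega⟩ : Fin (2 * n)))⁻¹).prod})) := by
  have key := ExampleVAux.main_key n 0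
  rw [show 2 * 0 = 0 from rfl, ExampleVAux.Sw_eq_prod, ExampleVAux.Tw_eq_prod,
    ExampleVAux.Cw_eq_prod] at key
  refine ⟨QuotientGroup.congr _ _ (ExampleVAux.EAut n 0) ?_⟩
  rw [Subgroup.map_normalClosure _ _ (ExampleVAux.EAut n 0).surjective,
    Set.image_singleton]
  rw [show ((ExampleVAux.EAut n 0) : FreeGroup (Fin (2*n)) →* FreeGroup (Fin (2*n)))
      ((List.ofFn fun i : Fin (2 * n) => FreeGroup.of i).prod *
       (List.ofFn fun i : Fin (2 * n) => (FreeGroup.of i)⁻¹).prod) = _ from key]
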